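/- Let n and b be natural numbers with n ≥ 1 and b ≥ 2, and write s_i = (b+1)·b^(n+i) − 1. Then Ap(T_b(n), s_0) = { t_1·s_1 + t_2·s_2 + ⋯ + t_(n+1)·s_(n+1) : (t_1,…,t_(n+1)) ∈ R_b(n) }. -/

import Mathlib

open Finset

def ds (b m : ℕ) : ℕ := (Nat.digits b m).sum

lemma ds_zero {b : ℕ} : ds b 0 = 0 := by simp [ds]

section dslem
variable {b : ℕ} (hb : 2 ≤ b)
include hb

lemma ds_eq {m : ℕ} (hm : m ≠ 0) : ds b m = m % b + ds b (m / b) := by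
  unfold ds
  rw [Nat.digits_def' (by omega : 1 < b) (by omega : 0 < m)]
  simp

lemma ds_add_mul {x y : ℕ} (hx : x < b) : ds b (x + b * y) = x + ds b y := by
  rcases Nat.eq_zero_or_pos y with hy | hy
  · subst hy
    rcases Nat.eq_zero_or_pos x with hx0 | hx0
    · simp [hx0, ds_zero]
    · rw [Nat.mul_zero, Nat.add_zero, ds_eq hb (by omega),
        Nat.mod_eq_of_lt hx, Nat.div_eq_of_lt hx, ds_zero]
  · have hne : x + b * y ≠ 0 := by positivity
    rw [ds_eq hb hne, Nat.add_mul_mod_self_left, Nat.mod_eq_of_lt hx,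
      Nat.add_mul_div_left _ _ (by omega : 0 < b), Nat.div_eq_of_lt hx, Nat.zero_add]

lemma ds_mul_b {y : ℕ} : ds b (b * y) = ds b y := by
  have := ds_add_mul hb (x := 0) (y := y) (by omega)
  simpa using this

lemma ds_one : ds b 1 = 1 := by
  rw [ds_eq hb one_ne_zero, Nat.mod_eq_of_lt (by omega), Nat.div_eq_of_lt (by omega), ds_zero]

lemma ds_pow {i : ℕ} : ds b (b ^ i) = 1 := by
  induction i with
  | zero => simpa using ds_one hb
  | succ k ih => rw [pow_succ, mul_comm, ds_mul_b hb, ih]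

lemma ds_le (m : ℕ) : ds b m ≤ m := by
  induction m using Nat.strong_induction_on with
  | _ m ih =>
    rcases Nat.eq_zero_or_pos m with h0 | h0
    · simp [h0, ds_zero]
    · rw [ds_eq hb (by omega)]
      have h1 : m / b < m := Nat.div_lt_self h0 (by omega)
      have := ih (m / b) h1
      have h2 : m % b + b * (m / b) = m := Nat.mod_add_div m b
      have hd : m / b ≤ b * (m / b) := Nat.le_mul_of_pos_left _ (by omega)
      omega

lemma ds_subadd (x y : ℕ) : ds b (x + y) ≤ ds b x + ds b y := by
  generalize hs : x + y = s
  induction s using Nat.strong_induction_on generalizing x y with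
  | _ s ih =>
    subst hs
    rcases Nat.eq_zero_or_pos x with h0 | h0
    · simp [h0]
    rcases Nat.eq_zero_or_pos y with h1 | h1
    · simp [h1]
    set a := x % b with ha
    set c := y % b with hc
    set x' := x / b with hx'
    set y' := y / b with hy'
    have hxd : a + b * x' = x := Nat.mod_add_div x b
    have hyd : c + b * y' = y := Nat.mod_add_div y b
    have hab : a < b := Nat.mod_lt _ (by omega)
    have hcb : c < b := Nat.mod_lt _ (by omega)
    have hdsx : ds b x = a + ds b x' := by rw [← hxd, ds_add_mul hb hab]
    have hdsy : ds b y = c + ds b y' := by rw [← hyd, ds_add_mul hb hcb]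
    by_cases hcase : a + c < b
    · have hxy : x + y = (a + c) + b * (x' + y') := by rw [← hxd, ← hyd]; ring
      rw [hxy, ds_add_mul hb hcase]
      have hlt : x' + y' < x + y := by
        have hx1 : x' < x := Nat.div_lt_self h0 (by omega)
        have hy1 : y' < y := Nat.div_lt_self h1 (by omega)
        omega
      have := ih (x' + y') hlt x' y' rfl
      omega
    · have hd : a + c - b < b := by omega
      have hxy : x + y = (a + c - b) + b * (x' + y' + 1) := by
        have : b * (x' + y' + 1) = b * x' + b * y' + b := by ring
        omega
      rw [hxy, ds_add_mul hb hd]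
      have hlt : x' + y' + 1 < x + y := by
        have hx1 : x' < x := Nat.div_lt_self h0 (by omega)
        have hy1 : y' < y := Nat.div_lt_self h1 (by omega)
        omega
      have h2 := ih (x' + y' + 1) hlt (x' + y') 1 rfl
      have hlt2 : x' + y' < x + y := by omega
      have h3 := ih (x' + y') hlt2 x' y' rfl
      have h4 : ds b 1 = 1 := ds_one hb
      omega

lemma ds_pred_lb {m : ℕ} (hm : 1 ≤ m) : ds b m ≤ ds b (m - 1) + 1 := by
  have := ds_subadd hb (m - 1) 1
  rw [Nat.sub_add_cancel hm] at this
  have := ds_one hb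
  omega

lemma ds_bmul_sub_one {M : ℕ} (hM : 1 ≤ M) :
    ds b (b * M - 1) = (b - 1) + ds b (M - 1) := by
  have h : b * M - 1 = (b - 1) + b * (M - 1) := by
    obtain ⟨k, rfl⟩ : ∃ k, M = k + 1 := ⟨M - 1, by omega⟩
    have : b * (k + 1) = b * k + b := by ring
    simp only [Nat.add_sub_cancel]
    omega
  rw [h, ds_add_mul hb (by omega)]

lemma ds_pow_mul_sub_one {x m : ℕ} (hx : 1 ≤ x) :
    ds b (b ^ m * x - 1) = ds b (x - 1) + m * (b - 1) := by
  induction m with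
  | zero => simp
  | succ k ih =>
    have h : b ^ (k + 1) * x = b * (b ^ k * x) := by ring
    rw [h, ds_bmul_sub_one hb (Nat.mul_pos (Nat.pow_pos (by omega : 0 < b)) hx), ih]
    ring

lemma ds_modeq (m : ℕ) : ∃ e, m = ds b m + (b - 1) * e := by
  induction m using Nat.strong_induction_on with
  | _ m ih =>
    rcases Nat.eq_zero_or_pos m with h0 | h0
    · exact ⟨0, by simp [h0, ds_zero]⟩
    · obtain ⟨e, he⟩ := ih (m / b) (Nat.div_lt_self h0 (by omega))
      refine ⟨m / b + e, ?_⟩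
      rw [ds_eq hb (by omega)]
      have h2 : m % b + b * (m / b) = m := Nat.mod_add_div m b
      have h3 : (b - 1) * (m / b + e) = (b - 1) * (m / b) + (b - 1) * e := by ring
      have hx : m / b ≤ b * (m / b) := Nat.le_mul_of_pos_left _ (by omega)
      have h4 : (b - 1) * (m / b) = b * (m / b) - (m / b) := by rw [Nat.sub_one_mul]
      have h5 : ds b (m / b) ≤ m / b := ds_le hb _
      omega

lemma ds_pred_of_not_dvd {M : ℕ} (hM : 1 ≤ M) (h : ¬ b ∣ M) :
    ds b M = ds b (M - 1) + 1 := by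
  have hr : M % b ≠ 0 := fun hc => h (Nat.dvd_of_mod_eq_zero hc)
  have h1 : M % b + b * (M / b) = M := Nat.mod_add_div M b
  have h2 : M - 1 = (M % b - 1) + b * (M / b) := by omega
  have hlt : M % b < b := Nat.mod_lt _ (by omega)
  rw [h2, ds_add_mul hb (by omega)]
  conv_lhs => rw [← h1]
  rw [ds_add_mul hb hlt]
  omega

end dslem
section digitlem
variable {b : ℕ} (hb : 2 ≤ b)
include hb

lemma digit_recon : ∀ {m M : ℕ}, M < b ^ m →
    ∑ i ∈ range m, (M / b ^ i % b) * b ^ i = M := by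
  intro m
  induction m with
  | zero =>
    intro M h
    simp only [pow_zero, Nat.lt_one_iff] at h
    simp [h]
  | succ k ih =>
    intro M h
    rw [Finset.sum_range_succ']
    have h1 : ∀ i, M / b ^ (i + 1) % b * b ^ (i + 1) = b * ((M / b) / b ^ i % b * b ^ i) := by
      intro i
      have hd : M / b ^ (i + 1) = M / b / b ^ i := by
        rw [Nat.div_div_eq_div_mul, ← pow_succ']
      rw [hd, pow_succ']
      ring
    rw [Finset.sum_congr rfl (fun i _ => h1 i), ← Finset.mul_sum]
    have hMb : M / b < b ^ k := by
      rw [Nat.div_lt_iff_lt_mul (by omega : 0 < b)]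
      rw [pow_succ] at h
      omega
    rw [ih hMb]
    simp only [pow_zero, mul_one, Nat.div_one]
    have := Nat.mod_add_div M b
    omega

lemma digit_ds : ∀ {m M : ℕ}, M < b ^ m →
    ∑ i ∈ range m, (M / b ^ i % b) = ds b M := by
  intro m
  induction m with
  | zero =>
    intro M h
    simp only [pow_zero, Nat.lt_one_iff] at h
    simp [h, ds_zero]
  | succ k ih =>
    intro M h
    rcases Nat.eq_zero_or_pos M with h0 | h0
    · subst h0; simp [ds_zero]
    rw [Finset.sum_range_succ']
    have h1 : ∀ i, M / b ^ (i + 1) % b = (M / b) / b ^ i % b := by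
      intro i
      rw [Nat.div_div_eq_div_mul, ← pow_succ']
    rw [Finset.sum_congr rfl (fun i _ => h1 i)]
    have hMb : M / b < b ^ k := by
      rw [Nat.div_lt_iff_lt_mul (by omega : 0 < b)]
      rw [pow_succ] at h
      omega
    rw [ds_eq hb (by omega : M ≠ 0), ih hMb]
    simp only [pow_zero, Nat.div_one]
    omega

lemma sum_eq_ds : ∀ {m : ℕ} (t : ℕ → ℕ), (∀ i, i < m → t (i + 1) ≤ b - 1) →
    ds b (∑ i ∈ range m, t (i + 1) * b ^ i) = ∑ i ∈ range m, t (i + 1) := by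
  intro m
  induction m with
  | zero => intro t _; simp [ds_zero]
  | succ k ih =>
    intro t ht
    rw [Finset.sum_range_succ' (fun i => t (i + 1) * b ^ i),
        Finset.sum_range_succ' (fun i => t (i + 1))]
    have h1 : ∀ i, t (i + 1 + 1) * b ^ (i + 1) = b * (t (i + 2) * b ^ i) := by
      intro i; rw [pow_succ]; ring
    rw [Finset.sum_congr rfl (fun i _ => h1 i), ← Finset.mul_sum]
    simp only [pow_zero, mul_one]
    rw [add_comm, ds_add_mul hb (by have := ht 0 (by omega); omega)]
    rw [ih (fun j => t (j + 1)) (fun i hi => ht (i + 1) (by omega))]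
    omega

lemma geom_sum : ∀ m : ℕ, (b - 1) * ∑ i ∈ range m, b ^ i + 1 = b ^ m := by
  intro m
  induction m with
  | zero => simp
  | succ k ih =>
    rw [Finset.sum_range_succ, Nat.mul_add, pow_succ]
    have h2 : (b - 1) * b ^ k = b * b ^ k - b ^ k := Nat.sub_one_mul b (b ^ k)
    have h3 : b ^ k ≤ b * b ^ k := Nat.le_mul_of_pos_left _ (by omega)
    have h4 : b ^ k * b = b * b ^ k := mul_comm _ _
    omega

lemma val_ub_std {m : ℕ} {t : ℕ → ℕ} (ht : ∀ i, i < m → t (i + 1) ≤ b - 1) :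
    ∑ i ∈ range m, t (i + 1) * b ^ i + 1 ≤ b ^ m := by
  have h1 : ∑ i ∈ range m, t (i + 1) * b ^ i ≤ ∑ i ∈ range m, (b - 1) * b ^ i := by
    apply Finset.sum_le_sum
    intro i hi
    exact Nat.mul_le_mul_right _ (ht i (Finset.mem_range.mp hi))
  have h2 : ∑ i ∈ range m, (b - 1) * b ^ i = (b - 1) * ∑ i ∈ range m, b ^ i :=
    (Finset.mul_sum _ _ _).symm
  have := geom_sum hb m
  omega

lemma oneb_decomp {m k : ℕ} {t : ℕ → ℕ} (hk : k < m) (hkb : t (k + 1) = b)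
    (h1 : ∀ i, i < m → t (i + 1) ≤ b)
    (h2 : ∀ j, t j = b → ∀ i < j, t i = 0) :
    ∃ H, (∑ i ∈ range m, t (i + 1) * b ^ i) = b ^ (k + 1) * (H + 1) ∧
      (∑ i ∈ range m, t (i + 1)) = b + ds b H ∧ H + 1 ≤ b ^ (m - k - 1) := by
  set H : ℕ := ∑ i ∈ range (m - k - 1), t (k + 1 + (i + 1)) * b ^ i with hH
  have hup : ∀ i, k + 1 < i → i ≤ m → t i ≤ b - 1 := by
    intro i hi him
    by_cases hc : t i = b
    · have h0 := h2 i hc (k + 1) hi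
      omega
    · have := h1 (i - 1) (by omega)
      rw [show i - 1 + 1 = i by omega] at this
      omega
  have hts : ∀ i, i < m - k - 1 → t (k + 1 + (i + 1)) ≤ b - 1 := by
    intro i hi
    exact hup (k + 1 + (i + 1)) (by omega) (by omega)
  have e1 : ∑ i ∈ range m, t (i + 1) * b ^ i
      = ∑ i ∈ range (k + 1), t (i + 1) * b ^ i
        + ∑ i ∈ range (m - k - 1), t (k + 1 + i + 1) * b ^ (k + 1 + i) := by
    conv_lhs => rw [show m = (k + 1) + (m - k - 1) by omega]
    rw [Finset.sum_range_add]
  have e2 : ∑ i ∈ range (k + 1), t (i + 1) * b ^ i = b ^ (k + 1) := by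
    rw [Finset.sum_range_succ]
    have hz : ∑ i ∈ range k, t (i + 1) * b ^ i = 0 := by
      apply Finset.sum_eq_zero
      intro i hi
      simp only [Finset.mem_range] at hi
      rw [h2 (k + 1) hkb (i + 1) (by omega)]
      ring
    rw [hz, hkb, pow_succ]
    ring
  have e3 : ∑ i ∈ range (m - k - 1), t (k + 1 + i + 1) * b ^ (k + 1 + i)
      = b ^ (k + 1) * H := by
    rw [hH, Finset.mul_sum]
    apply Finset.sum_congr rfl
    intro i _
    rw [show k + 1 + i + 1 = k + 1 + (i + 1) by omega, pow_add]
    ring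
  have e4 : ∑ i ∈ range m, t (i + 1)
      = ∑ i ∈ range (k + 1), t (i + 1)
        + ∑ i ∈ range (m - k - 1), t (k + 1 + (i + 1)) := by
    conv_lhs => rw [show m = (k + 1) + (m - k - 1) by omega]
    rw [Finset.sum_range_add]
    have h : ∑ x ∈ range (m - k - 1), t (k + 1 + x + 1)
        = ∑ x ∈ range (m - k - 1), t (k + 1 + (x + 1)) :=
      Finset.sum_congr rfl fun i _ => by rw [show k + 1 + i + 1 = k + 1 + (i + 1) by omega]
    rw [h]
  have e5 : ∑ i ∈ range (k + 1), t (i + 1) = b := by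
    rw [Finset.sum_range_succ]
    have hz : ∑ i ∈ range k, t (i + 1) = 0 := by
      apply Finset.sum_eq_zero
      intro i hi
      simp only [Finset.mem_range] at hi
      exact h2 (k + 1) hkb (i + 1) (by omega)
    rw [hz, hkb]
    ring
  have e6 : ds b H = ∑ i ∈ range (m - k - 1), t (k + 1 + (i + 1)) :=
    sum_eq_ds hb (fun j => t (k + 1 + j)) hts
  refine ⟨H, ?_, ?_, ?_⟩
  · rw [e1, e2, e3]
    ring
  · rw [e4, e5, e6]
  · exact val_ub_std hb (t := fun j => t (k + 1 + j)) (m := m - k - 1) hts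

end digitlem
/-- The Thabit numerical semigroup base `b`: the additive submonoid of ℕ generated by
`{(b+1)·b^(n+i) − 1 : i ∈ ℕ}`. -/
def thabitSemigroup (b n : ℕ) : AddSubmonoid ℕ :=
  AddSubmonoid.closure {m : ℕ | ∃ i : ℕ, m = (b + 1) * b ^ (n + i) - 1}

/-- `R_b(n)`: tuples `(t_1,…,t_(n+1))` with entries in `{0,…,b}` (encoded as functions
`ℕ → ℕ` supported on `{1,…,n+1}`) such that: `t_(n+1) ≤ b−1`; if `t_j = b` then `t_i = 0`
for all `i < j`; if `t_(n+1) = b−1` then `t_n ≤ b−1`; and if `t_n = t_(n+1) = b−1` then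
`t_1 = ⋯ = t_(n−1) = 0`. -/
def Rb (b n : ℕ) (t : ℕ → ℕ) : Prop :=
  (∀ j, t j ≤ b) ∧
  (∀ j, j ∉ Finset.Icc 1 (n + 1) → t j = 0) ∧
  t (n + 1) ≤ b - 1 ∧
  (∀ j, t j = b → ∀ i < j, t i = 0) ∧
  (t (n + 1) = b - 1 → t n ≤ b - 1) ∧
  (t n = b - 1 → t (n + 1) = b - 1 → ∀ i, 1 ≤ i → i ≤ n - 1 → t i = 0)

section semi
variable {b n : ℕ} (hb : 2 ≤ b) (hn : 1 ≤ n)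
include hb

lemma ds_lt_b {x : ℕ} (hx : x < b) : ds b x = x := by
  rcases Nat.eq_zero_or_pos x with h | h
  · simp [h, ds_zero]
  · rw [ds_eq hb (by omega), Nat.mod_eq_of_lt hx, Nat.div_eq_of_lt hx, ds_zero]
    omega

lemma ds_pow_mul {k x : ℕ} : ds b (b ^ k * x) = ds b x := by
  induction k with
  | zero => simp
  | succ j ih => rw [pow_succ, mul_comm (b ^ j) b, mul_assoc, ds_mul_b hb, ih]

omit hb in
lemma gen_mem (i : ℕ) : (b + 1) * b ^ (n + i) - 1 ∈ thabitSemigroup b n :=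
  AddSubmonoid.subset_closure ⟨i, rfl⟩

omit hb in
lemma sum_mem_thabit (t : ℕ → ℕ) :
    (∑ j ∈ Finset.Icc 1 (n + 1), t j * ((b + 1) * b ^ (n + j) - 1)) ∈ thabitSemigroup b n := by
  apply AddSubmonoid.sum_mem
  intro j _
  have := gen_mem (b := b) (n := n) j
  simpa [smul_eq_mul] using AddSubmonoid.nsmul_mem (thabitSemigroup b n) this (t j)

lemma mem_char {v : ℕ} (hv : v ∈ thabitSemigroup b n) :
    ∃ C P : ℕ, v + C = (b + 1) * b ^ n * P ∧ C ≤ P ∧ ds b P ≤ C ∧ (b - 1) ∣ (P - C) := by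
  induction hv using AddSubmonoid.closure_induction with
  | mem x hx =>
    obtain ⟨i, rfl⟩ := hx
    refine ⟨1, b ^ i, ?_, Nat.one_le_pow _ _ (by omega), by rw [ds_pow hb], ?_⟩
    · have h1 : (b + 1) * b ^ (n + i) = (b + 1) * b ^ n * b ^ i := by rw [pow_add]; ring
      have h2 : 1 ≤ (b + 1) * b ^ (n + i) := Nat.mul_pos (by omega) (Nat.pow_pos (by omega))
      omega
    · have := Nat.sub_dvd_pow_sub_pow b 1 i
      simpa using this
  | zero => exact ⟨0, 0, by simp, le_refl _, by simp [ds_zero], by simp⟩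
  | add x y hx hy ihx ihy =>
    obtain ⟨C1, P1, e1, l1, d1, v1⟩ := ihx
    obtain ⟨C2, P2, e2, l2, d2, v2⟩ := ihy
    refine ⟨C1 + C2, P1 + P2, by rw [Nat.mul_add]; omega, by omega, ?_, ?_⟩
    · calc ds b (P1 + P2) ≤ ds b P1 + ds b P2 := ds_subadd hb _ _
        _ ≤ C1 + C2 := by omega
    · have : P1 + P2 - (C1 + C2) = (P1 - C1) + (P2 - C2) := by omega
      rw [this]
      exact Nat.dvd_add v1 v2

lemma Rb_cases {t : ℕ → ℕ} (ht : Rb b n t) :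
    (∀ i, i < n + 1 → t (i + 1) ≤ b - 1) ∨ (∃ k, k < n + 1 ∧ t (k + 1) = b) := by
  by_cases h : ∃ k, k < n + 1 ∧ t (k + 1) = b
  · exact Or.inr h
  · push_neg at h
    left
    intro i hi
    have h1 := ht.1 (i + 1)
    have h2 := h i hi
    omega

/-- Key digit-sum lower bound. -/
lemma ds_lb {t : ℕ → ℕ} (ht : Rb b n t)
    (hT : 1 ≤ ∑ i ∈ range (n + 1), t (i + 1)) :
    ∑ i ∈ range (n + 1), t (i + 1) ≤
      ds b (b * (∑ i ∈ range (n + 1), t (i + 1) * b ^ i) - 1) := by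
  have hTM : (∑ i ∈ range (n + 1), t (i + 1)) ≤ ∑ i ∈ range (n + 1), t (i + 1) * b ^ i := by
    apply Finset.sum_le_sum
    intro i _
    exact Nat.le_mul_of_pos_right _ (Nat.pow_pos (by omega : 0 < b))
  have hM1 : 1 ≤ ∑ i ∈ range (n + 1), t (i + 1) * b ^ i := le_trans hT hTM
  rcases Rb_cases hb ht with hstd | ⟨k, hk, hkb⟩
  · have hds := sum_eq_ds hb t hstd
    have h1 := ds_bmul_sub_one hb hM1
    have h2 := ds_pred_lb hb hM1
    omega
  · obtain ⟨H, hMd, hTd, _⟩ := oneb_decomp hb hk hkb (fun i hi => ht.1 (i + 1)) ht.2.2.2.1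
    have hbM : b * (∑ i ∈ range (n + 1), t (i + 1) * b ^ i) = b ^ (k + 2) * (H + 1) := by
      rw [hMd, show k + 2 = (k + 1) + 1 by rfl, pow_succ]
      ring
    rw [hbM, ds_pow_mul_sub_one hb (by omega : 1 ≤ H + 1), hTd]
    simp only [Nat.add_sub_cancel]
    have h3 : 2 * (b - 1) ≤ (k + 2) * (b - 1) := Nat.mul_le_mul_right _ (by omega)
    omega

/-- value upper bound, refined disjunction -/
lemma val_ub_R2 {m : ℕ} {t : ℕ → ℕ} (h1 : ∀ i, i < m → t (i + 1) ≤ b)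
    (h2 : ∀ j, t j = b → ∀ i < j, t i = 0) :
    (∑ i ∈ range m, t (i + 1) * b ^ i) + 1 ≤ b ^ m ∨
      (b ≤ ∑ i ∈ range m, t (i + 1) ∧ (∑ i ∈ range m, t (i + 1) * b ^ i) ≤ b ^ m) := by
  by_cases h : ∃ k, k < m ∧ t (k + 1) = b
  · obtain ⟨k, hk, hkb⟩ := h
    obtain ⟨H, hMd, hTd, hHb⟩ := oneb_decomp hb hk hkb h1 h2
    right
    constructor
    · omega
    · rw [hMd]
      calc b ^ (k + 1) * (H + 1) ≤ b ^ (k + 1) * b ^ (m - k - 1) :=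
            Nat.mul_le_mul_left _ hHb
        _ = b ^ m := by rw [← pow_add]; congr 1; omega
  · push_neg at h
    left
    exact val_ub_std hb (fun i hi => by have := h1 i hi; have := h i hi; omega)

lemma T_bound {t : ℕ → ℕ} (ht : Rb b n t) :
    (∑ i ∈ range (n + 1), t (i + 1)) + 1 ≤ (b + 1) * b ^ n := by
  have h1 : (∑ i ∈ range (n + 1), t (i + 1)) ≤ (n + 1) * b := by
    calc (∑ i ∈ range (n + 1), t (i + 1)) ≤ ∑ i ∈ range (n + 1), b :=
          Finset.sum_le_sum (fun i _ => ht.1 (i + 1))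
      _ = (n + 1) * b := by rw [Finset.sum_const, Finset.card_range, smul_eq_mul]
  have h2 : n + 1 ≤ b ^ n :=
    le_trans (@Nat.lt_two_pow_self n) (Nat.pow_le_pow_left (by omega) n)
  have h3 : (n + 1) * b ≤ b ^ n * b := Nat.mul_le_mul_right _ h2
  have h4 : b ^ n * b = b ^ (n + 1) := (pow_succ b n).symm
  have h5 : b ^ (n + 1) = b * b ^ n := by rw [pow_succ]; ring
  have h6 : 1 ≤ b ^ n := Nat.one_le_pow _ _ (by omega)
  have h7 : (b + 1) * b ^ n = b * b ^ n + b ^ n := by ring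
  omega

include hn in
/-- the maximum-value bound: `b*M + b^n + 2b ≤ b^(n+2) + 2 + T`. -/
lemma val_max {t : ℕ → ℕ} (ht : Rb b n t) :
    b * (∑ i ∈ range (n + 1), t (i + 1) * b ^ i) + (b ^ n + 2 * b) ≤
      b ^ (n + 2) + 2 + (∑ i ∈ range (n + 1), t (i + 1)) := by
  -- power facts
  have hbP : b * b ^ n = b ^ (n + 1) := by rw [pow_succ]; ring
  have hbR : b * b ^ (n + 1) = b ^ (n + 2) := by rw [pow_succ]; ring
  have hbQ : b * b ^ (n - 1) = b ^ n := by
    rw [← pow_succ']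
    congr 1
    omega
  have hPb : b ≤ b ^ n := by
    calc b = b ^ 1 := (pow_one b).symm
      _ ≤ b ^ n := Nat.pow_le_pow_right (by omega) hn
  have h1P : 1 ≤ b ^ (n - 1) := Nat.one_le_pow _ _ (by omega)
  have h2P : 2 * b ^ n ≤ b * b ^ n := Nat.mul_le_mul_right _ (by omega)
  have h2Q : 2 * b ^ (n - 1) ≤ b * b ^ (n - 1) := Nat.mul_le_mul_right _ (by omega)
  have h2R : 2 * b ^ (n + 1) ≤ b * b ^ (n + 1) := Nat.mul_le_mul_right _ (by omega)
  -- decompose the sums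
  have hMd : ∑ i ∈ range (n + 1), t (i + 1) * b ^ i
      = (∑ i ∈ range (n - 1), t (i + 1) * b ^ i) + t n * b ^ (n - 1) + t (n + 1) * b ^ n := by
    rw [Finset.sum_range_succ]
    congr 1
    conv_lhs => rw [show n = (n - 1) + 1 by omega, Finset.sum_range_succ]
    rw [show n - 1 + 1 = n by omega]
  have hTd : ∑ i ∈ range (n + 1), t (i + 1)
      = (∑ i ∈ range (n - 1), t (i + 1)) + t n + t (n + 1) := by
    rw [Finset.sum_range_succ]
    congr 1
    conv_lhs => rw [show n = (n - 1) + 1 by omega, Finset.sum_range_succ]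
    rw [show n - 1 + 1 = n by omega]
  set Ml := ∑ i ∈ range (n - 1), t (i + 1) * b ^ i with hMl
  set Tl := ∑ i ∈ range (n - 1), t (i + 1) with hTl
  -- expansion of b*M
  have hexp : b * ((Ml + t n * b ^ (n - 1)) + t (n + 1) * b ^ n)
      = b * Ml + t n * b ^ n + t (n + 1) * b ^ (n + 1) := by
    rw [← hbP, ← hbQ]
    ring
  rw [hMd, hTd, show Ml + t n * b ^ (n - 1) + t (n + 1) * b ^ n
      = (Ml + t n * b ^ (n - 1)) + t (n + 1) * b ^ n by ring, hexp]
  have htn1 : t (n + 1) ≤ b - 1 := ht.2.2.1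
  by_cases hcase : t (n + 1) = b - 1
  · -- top coefficient is b-1
    have htn : t n ≤ b - 1 := ht.2.2.2.2.1 hcase
    by_cases hcase2 : t n = b - 1
    · -- both b-1 : low part zero
      have hlow : ∀ i, i < n - 1 → t (i + 1) = 0 := by
        intro i hi
        exact ht.2.2.2.2.2 hcase2 hcase (i + 1) (by omega) (by omega)
      have hMl0 : Ml = 0 := Finset.sum_eq_zero (fun i hi => by
        rw [hlow i (Finset.mem_range.mp hi)]; ring)
      have hTl0 : Tl = 0 := Finset.sum_eq_zero (fun i hi => hlow i (Finset.mem_range.mp hi))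
      rw [hMl0, hTl0, hcase, hcase2]
      have e1 : (b - 1) * b ^ n = b * b ^ n - b ^ n := Nat.sub_one_mul _ _
      have e2 : (b - 1) * b ^ (n + 1) = b * b ^ (n + 1) - b ^ (n + 1) := Nat.sub_one_mul _ _
      have e3 : b ^ n ≤ b * b ^ n := Nat.le_mul_of_pos_left _ (by omega)
      have e4 : b ^ (n + 1) ≤ b * b ^ (n + 1) := Nat.le_mul_of_pos_left _ (by omega)
      omega
    · -- t n ≤ b - 2
      have htn2 : t n ≤ b - 2 := by omega
      have hdisj := val_ub_R2 hb (m := n - 1) (t := t)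
        (fun i hi => ht.1 (i + 1)) ht.2.2.2.1
      rw [← hMl, ← hTl] at hdisj
      have e5 : t n * b ^ n ≤ (b - 2) * b ^ n := Nat.mul_le_mul_right _ htn2
      have e6 : (b - 2) * b ^ n = b * b ^ n - 2 * b ^ n := by rw [Nat.sub_mul]
      have e7 : 2 * b ^ n ≤ b * b ^ n := Nat.mul_le_mul_right _ (by omega)
      have e8 : (b - 1) * b ^ (n + 1) = b * b ^ (n + 1) - b ^ (n + 1) := Nat.sub_one_mul _ _
      have e9 : b ^ (n + 1) ≤ b * b ^ (n + 1) := Nat.le_mul_of_pos_left _ (by omega)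
      rw [hcase]
      rcases hdisj with hstd | ⟨hTb, hMb⟩
      · have e10 : b * (Ml + 1) ≤ b * b ^ (n - 1) := Nat.mul_le_mul_left _ hstd
        have e11 : b * (Ml + 1) = b * Ml + b := by ring
        omega
      · have e10 : b * Ml ≤ b * b ^ (n - 1) := Nat.mul_le_mul_left _ hMb
        omega
  · -- t (n+1) ≤ b - 2
    have htn1' : t (n + 1) ≤ b - 2 := by omega
    -- bound on the middle sum (range n)
    have hdisj := val_ub_R2 hb (m := n) (t := t) (fun i hi => ht.1 (i + 1)) ht.2.2.2.1
    have hMmid : ∑ i ∈ range n, t (i + 1) * b ^ i = Ml + t n * b ^ (n - 1) := by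
      conv_lhs => rw [show n = (n - 1) + 1 by omega, Finset.sum_range_succ]
      rw [show n - 1 + 1 = n by omega, hMl]
    have hTmid : ∑ i ∈ range n, t (i + 1) = Tl + t n := by
      conv_lhs => rw [show n = (n - 1) + 1 by omega, Finset.sum_range_succ]
      rw [show n - 1 + 1 = n by omega, hTl]
    rw [hMmid, hTmid] at hdisj
    have e5 : t (n + 1) * b ^ (n + 1) ≤ (b - 2) * b ^ (n + 1) := Nat.mul_le_mul_right _ htn1'
    have e6 : (b - 2) * b ^ (n + 1) = b * b ^ (n + 1) - 2 * b ^ (n + 1) := by rw [Nat.sub_mul]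
    have e7 : 2 * b ^ (n + 1) ≤ b * b ^ (n + 1) := Nat.mul_le_mul_right _ (by omega)
    have hexp2 : ∀ X : ℕ, b * (X + t n * b ^ (n - 1)) = b * X + t n * b ^ n := by
      intro X
      rw [← hbQ]
      ring
    rcases hdisj with hstd | ⟨hTb, hMb⟩
    · have e10 : b * ((Ml + t n * b ^ (n - 1)) + 1) ≤ b * b ^ n := Nat.mul_le_mul_left _ hstd
      have e11 : b * ((Ml + t n * b ^ (n - 1)) + 1) = b * Ml + t n * b ^ n + b := by
        rw [← hbQ]
        ring
      omega
    · have e10 : b * (Ml + t n * b ^ (n - 1)) ≤ b * b ^ n := Nat.mul_le_mul_left _ hMb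
      have e11 : b * (Ml + t n * b ^ (n - 1)) = b * Ml + t n * b ^ n := hexp2 Ml
      omega

end semi

section apery
variable {b n : ℕ} (hb : 2 ≤ b) (hn : 1 ≤ n)

lemma icc_to_range (f : ℕ → ℕ) :
    ∑ j ∈ Finset.Icc 1 (n + 1), f j = ∑ i ∈ range (n + 1), f (i + 1) := by
  rw [show Finset.Icc 1 (n + 1) = Finset.Ico 1 (n + 2) from (Finset.Ico_add_one_right_eq_Icc 1 (n + 1)).symm]
  rw [Finset.sum_Ico_eq_sum_range]
  simp [add_comm]

include hb in
lemma w_id (t : ℕ → ℕ) :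
    (∑ i ∈ range (n + 1), t (i + 1) * ((b + 1) * b ^ (n + (i + 1)) - 1))
      + (∑ i ∈ range (n + 1), t (i + 1))
      = (b + 1) * b ^ n * (b * (∑ i ∈ range (n + 1), t (i + 1) * b ^ i)) := by
  rw [← Finset.sum_add_distrib, Finset.mul_sum, Finset.mul_sum]
  apply Finset.sum_congr rfl
  intro i _
  have h1 : 1 ≤ (b + 1) * b ^ (n + (i + 1)) := Nat.mul_pos (by omega) (Nat.pow_pos (by omega))
  have h2 : t (i + 1) * ((b + 1) * b ^ (n + (i + 1)))
      = t (i + 1) * ((b + 1) * b ^ (n + (i + 1)) - 1) + t (i + 1) := by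
    calc t (i + 1) * ((b + 1) * b ^ (n + (i + 1)))
        = t (i + 1) * (((b + 1) * b ^ (n + (i + 1)) - 1) + 1) := by rw [Nat.sub_add_cancel h1]
      _ = t (i + 1) * ((b + 1) * b ^ (n + (i + 1)) - 1) + t (i + 1) := by ring
  rw [← h2, show n + (i + 1) = n + i + 1 by omega, pow_succ, pow_add]
  ring

include hb in
lemma MT_dvd (t : ℕ → ℕ) :
    (b - 1) ∣ (b * (∑ i ∈ range (n + 1), t (i + 1) * b ^ i)
      - (∑ i ∈ range (n + 1), t (i + 1))) := by
  have hle : ∀ i ∈ range (n + 1), t (i + 1) ≤ t (i + 1) * b ^ i := fun i _ =>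
    Nat.le_mul_of_pos_right _ (Nat.pow_pos (by omega : 0 < b))
  have hTM : (∑ i ∈ range (n + 1), t (i + 1)) ≤ ∑ i ∈ range (n + 1), t (i + 1) * b ^ i :=
    Finset.sum_le_sum hle
  have h1 : (∑ i ∈ range (n + 1), t (i + 1) * b ^ i) - (∑ i ∈ range (n + 1), t (i + 1))
      = ∑ i ∈ range (n + 1), (t (i + 1) * b ^ i - t (i + 1)) :=
    (Finset.sum_tsub_distrib _ hle).symm
  have h2 : (b - 1) ∣ (∑ i ∈ range (n + 1), t (i + 1) * b ^ i) - (∑ i ∈ range (n + 1), t (i + 1)) := by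
    rw [h1]
    apply Finset.dvd_sum
    intro i _
    have : t (i + 1) * b ^ i - t (i + 1) = t (i + 1) * (b ^ i - 1) := by
      rw [Nat.mul_sub, Nat.mul_one]
    rw [this]
    exact Dvd.dvd.mul_left (by simpa using Nat.sub_dvd_pow_sub_pow b 1 i) _
  set M := ∑ i ∈ range (n + 1), t (i + 1) * b ^ i
  set T := ∑ i ∈ range (n + 1), t (i + 1)
  have h3 : b * M - T = (b - 1) * M + (M - T) := by
    have h4 : (b - 1) * M = b * M - M := Nat.sub_one_mul _ _
    have h5 : M ≤ b * M := Nat.le_mul_of_pos_left _ (by omega)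
    omega
  rw [h3]
  exact Nat.dvd_add (Dvd.intro M rfl) h2

include hb hn in
lemma Rb_apery {t : ℕ → ℕ} (ht : Rb b n t) :
    (∑ j ∈ Finset.Icc 1 (n + 1), t j * ((b + 1) * b ^ (n + j) - 1)) ∈ thabitSemigroup b n ∧
    ¬ ∃ v ∈ thabitSemigroup b n,
        v + ((b + 1) * b ^ n - 1) = ∑ j ∈ Finset.Icc 1 (n + 1), t j * ((b + 1) * b ^ (n + j) - 1) := by
  constructor
  · exact sum_mem_thabit t
  rintro ⟨v, hvS, hveq⟩
  rw [icc_to_range] at hveq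
  obtain ⟨C, P, hCP, hCleP, hdsP, hdvd⟩ := mem_char hb hvS
  set N := (b + 1) * b ^ n with hN
  set M := ∑ i ∈ range (n + 1), t (i + 1) * b ^ i with hM
  set T := ∑ i ∈ range (n + 1), t (i + 1) with hT
  have hNpos : 2 ≤ N := by
    have : 1 ≤ b ^ n := Nat.one_le_pow _ _ (by omega)
    calc 2 ≤ (b + 1) * 1 := by omega
      _ ≤ (b + 1) * b ^ n := Nat.mul_le_mul_left _ this
  have hw := w_id hb (n := n) t
  rw [← hM, ← hT, ← hN] at hw
  have hTb : T + 1 ≤ N := T_bound hb ht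
  have hTM : T ≤ M := by
    apply Finset.sum_le_sum
    intro i _
    exact Nat.le_mul_of_pos_right _ (Nat.pow_pos (by omega : 0 < b))
  have hMbM : M ≤ b * M := Nat.le_mul_of_pos_left _ (by omega)
  -- main linear equation: N*P + T + N = N*(b*M) + C + 1
  have hE : N * P + T + N = N * (b * M) + C + 1 := by omega
  -- extract q
  have hq : ∃ q, C + 1 = T + q * N ∧ P + 1 = b * M + q := by
    rcases le_or_gt (b * M) (P + 1) with h | h
    · refine ⟨P + 1 - b * M, ?_, by omega⟩
      have h1 : N * (P + 1) = N * (b * M) + N * (P + 1 - b * M) := by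
        rw [← Nat.mul_add]
        congr 1
        omega
      have h2 : N * (P + 1) = N * P + N := by ring
      have h3 : N * (P + 1 - b * M) = (P + 1 - b * M) * N := Nat.mul_comm _ _
      omega
    · exfalso
      have h1 : N * (b * M) = N * (P + 1) + N * (b * M - (P + 1)) := by
        rw [← Nat.mul_add]
        congr 1
        omega
      have h2 : N ≤ N * (b * M - (P + 1)) := Nat.le_mul_of_pos_right _ (by omega)
      have h3 : N * (P + 1) = N * P + N := by ring
      omega
  obtain ⟨q, hq1, hq2⟩ := hq
  rcases Nat.eq_zero_or_pos q with hq0 | hqpos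
  · -- q = 0 : digit-sum contradiction
    subst hq0
    simp only [Nat.zero_mul, Nat.add_zero] at hq1 hq2
    have hT1 : 1 ≤ T := by omega
    have hlb := ds_lb hb ht hT1
    rw [← hM, ← hT] at hlb
    rw [show b * M - 1 = P by omega] at hlb
    omega
  · -- q ≥ 1
    have hCP2 : T + q * N ≤ b * M + q := by omega
    -- q ≤ b - 2
    have hqle : q ≤ b - 2 := by
      by_contra hc
      have hqb : b - 1 ≤ q := by omega
      have h1 : (b - 1) * (N - 1) ≤ q * (N - 1) := Nat.mul_le_mul_right _ hqb
      have h1a : q * (N - 1) = q * N - q := by rw [Nat.mul_sub, Nat.mul_one]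
      have h1b : (b - 1) * (N - 1) = (b - 1) * N - (b - 1) := by rw [Nat.mul_sub, Nat.mul_one]
      have h2 : (b - 1) * N = b * N - N := Nat.sub_one_mul _ _
      have h2a : N ≤ b * N := Nat.le_mul_of_pos_left _ (by omega)
      have h3 : b * N = b ^ (n + 2) + b ^ (n + 1) := by
        rw [hN, pow_succ, pow_succ]
        ring
      have h4 := val_max hb hn ht
      rw [← hM, ← hT] at h4
      have h5 : b ^ (n + 1) = b * b ^ n := by rw [pow_succ]; ring
      have h6 : 2 * b ^ n ≤ b * b ^ n := Nat.mul_le_mul_right _ (by omega)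
      have h7 : b ≤ b ^ n := by
        calc b = b ^ 1 := (pow_one b).symm
          _ ≤ b ^ n := Nat.pow_le_pow_right (by omega) hn
      have hNexp : N = b * b ^ n + b ^ n := by rw [hN]; ring
      have hq1N : q ≤ q * N := Nat.le_mul_of_pos_right _ (by omega)
      omega
    have hb3 : 3 ≤ b := by omega
    -- divisibility contradiction
    have hd1 : (b - 1) ∣ (b * M - T) := MT_dvd hb t
    have hd2 : P - C = (b * M - T) - q * (N - 1) := by
      have h1 : q * N = q * (N - 1) + q := by
        calc q * N = q * ((N - 1) + 1) := by rw [show (N - 1) + 1 = N by omega]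
          _ = q * (N - 1) + q := by ring
      omega
    have hd3 : q * (N - 1) ≤ b * M - T := by
      have h1 : q * N = q * (N - 1) + q := by
        calc q * N = q * ((N - 1) + 1) := by rw [show (N - 1) + 1 = N by omega]
          _ = q * (N - 1) + q := by ring
      omega
    have hd4 : (b - 1) ∣ q * (N - 1) := by
      have : q * (N - 1) = (b * M - T) - (P - C) := by omega
      rw [this]
      exact Nat.dvd_sub hd1 hdvd
    have hcop : Nat.Coprime (b - 1) (N - 1) := by
      have hdc : (b - 1) ∣ (N - 2) := by
        have h1 : N - 2 = (b + 1) * (b ^ n - 1) + (b - 1) := by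
          have h2 : (b + 1) * (b ^ n - 1) = (b + 1) * b ^ n - (b + 1) := by
            rw [Nat.mul_sub, Nat.mul_one]
          have h3 : b + 1 ≤ (b + 1) * b ^ n :=
            Nat.le_mul_of_pos_right _ (Nat.pow_pos (by omega))
          omega
        rw [h1]
        exact Nat.dvd_add (Dvd.dvd.mul_left (by simpa using Nat.sub_dvd_pow_sub_pow b 1 n) _)
          dvd_rfl
      have : Nat.gcd (b - 1) (N - 1) ∣ 1 := by
        have g1 : Nat.gcd (b - 1) (N - 1) ∣ N - 2 := dvd_trans (Nat.gcd_dvd_left _ _) hdc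
        have g2 : Nat.gcd (b - 1) (N - 1) ∣ N - 1 := Nat.gcd_dvd_right _ _
        have := Nat.dvd_sub g2 g1
        rwa [show N - 1 - (N - 2) = 1 by omega] at this
      exact Nat.eq_one_of_dvd_one this
    have hdq : (b - 1) ∣ q := hcop.dvd_of_dvd_mul_right hd4
    have := Nat.le_of_dvd hqpos hdq
    omega

end apery

section construct
variable {b n : ℕ} (hb : 2 ≤ b) (hn : 1 ≤ n)

lemma pair_le_sum (f : ℕ → ℕ) {x y m : ℕ} (hx : x < m) (hy : y < m) (hxy : x ≠ y) :
    f x + f y ≤ ∑ i ∈ range m, f i := by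
  have hsub : ({x, y} : Finset ℕ) ⊆ range m := by
    intro z hz
    simp only [Finset.mem_insert, Finset.mem_singleton] at hz
    rcases hz with rfl | rfl <;> simp [Finset.mem_range, hx, hy]
  calc f x + f y = ∑ i ∈ ({x, y} : Finset ℕ), f i := by
        rw [Finset.sum_insert (by simp [hxy]), Finset.sum_singleton]
    _ ≤ ∑ i ∈ range m, f i := Finset.sum_le_sum_of_subset hsub

lemma triple_le_sum (f : ℕ → ℕ) {x y z m : ℕ} (hx : x < m) (hy : y < m) (hz : z < m)
    (hxy : x ≠ y) (hxz : x ≠ z) (hyz : y ≠ z) :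
    f x + f y + f z ≤ ∑ i ∈ range m, f i := by
  have hsub : ({x, y, z} : Finset ℕ) ⊆ range m := by
    intro w hw
    simp only [Finset.mem_insert, Finset.mem_singleton] at hw
    rcases hw with rfl | rfl | rfl <;> simp [Finset.mem_range, hx, hy, hz]
  calc f x + f y + f z = ∑ i ∈ ({x, y, z} : Finset ℕ), f i := by
        rw [Finset.sum_insert (by simp [hxy, hxz]),
          Finset.sum_insert (by simp [hyz]), Finset.sum_singleton]
        ring
    _ ≤ ∑ i ∈ range m, f i := Finset.sum_le_sum_of_subset hsub

include hb hn in
lemma Rb_of_sum {t : ℕ → ℕ} {M : ℕ}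
    (h1 : ∀ j, t j ≤ b)
    (h2 : ∀ j, j ∉ Finset.Icc 1 (n + 1) → t j = 0)
    (h4 : ∀ j, t j = b → ∀ i < j, t i = 0)
    (hsum : ∑ i ∈ range (n + 1), t (i + 1) * b ^ i = M)
    (hMmax : M ≤ (b - 1) * b ^ n + (b - 1) * b ^ (n - 1)) :
    Rb b n t := by
  have e1 : (b - 1) * b ^ n = b * b ^ n - b ^ n := Nat.sub_one_mul _ _
  have e2 : (b - 1) * b ^ (n - 1) = b * b ^ (n - 1) - b ^ (n - 1) := Nat.sub_one_mul _ _
  have e3 : b ^ n ≤ b * b ^ n := Nat.le_mul_of_pos_left _ (by omega)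
  have e4 : b ^ (n - 1) ≤ b * b ^ (n - 1) := Nat.le_mul_of_pos_left _ (by omega)
  have e5 : b * b ^ (n - 1) = b ^ n := by
    rw [← pow_succ']
    congr 1
    omega
  have e6 : b * b ^ n = b ^ (n + 1) := by rw [pow_succ]; ring
  have e7 : 1 ≤ b ^ (n - 1) := Nat.one_le_pow _ _ (by omega)
  refine ⟨h1, h2, ?_, h4, ?_, ?_⟩
  · -- t (n+1) ≤ b - 1
    by_contra hc
    have htop : t (n + 1) = b := by have := h1 (n + 1); omega
    have hle : t (n + 1) * b ^ n ≤ M := by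
      rw [← hsum]
      exact Finset.single_le_sum (f := fun i => t (i + 1) * b ^ i)
        (fun i _ => Nat.zero_le _) (Finset.self_mem_range_succ n)
    rw [htop] at hle
    omega
  · -- t (n+1) = b - 1 → t n ≤ b - 1
    intro htop
    by_contra hc
    have htn : t n = b := by have := h1 n; omega
    have hle : t n * b ^ (n - 1) + t (n + 1) * b ^ n ≤ M := by
      rw [← hsum]
      have h := pair_le_sum (f := fun i => t (i + 1) * b ^ i)
        (x := n - 1) (y := n) (m := n + 1) (by omega) (by omega) (by omega)
      simpa [show n - 1 + 1 = n by omega] using h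
    rw [htn, htop] at hle
    omega
  · -- t n = b-1 → t (n+1) = b-1 → low zero
    intro htn htop i hi1 hi2
    by_contra hc
    have hn2 : 2 ≤ n := by omega
    have hle : t i * b ^ (i - 1) + t n * b ^ (n - 1) + t (n + 1) * b ^ n ≤ M := by
      rw [← hsum]
      have h := triple_le_sum (f := fun j => t (j + 1) * b ^ j)
        (x := i - 1) (y := n - 1) (z := n) (m := n + 1)
        (by omega) (by omega) (by omega) (by omega) (by omega) (by omega)
      simpa [show i - 1 + 1 = i by omega, show n - 1 + 1 = n by omega] using h
    rw [htn, htop] at hle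
    have hti : 1 ≤ t i * b ^ (i - 1) :=
      Nat.mul_pos (by omega) (Nat.pow_pos (by omega))
    omega

include hb in
lemma sum_split_first (s : ℕ → ℕ) (m : ℕ) :
    ∑ i ∈ range (m + 1), s (i + 1) * b ^ i
      = s 1 + b * ∑ i ∈ range m, s (i + 2) * b ^ i := by
  rw [Finset.sum_range_succ' (fun i => s (i + 1) * b ^ i) m]
  simp only [pow_zero, mul_one, Nat.zero_add]
  rw [add_comm, Finset.mul_sum]
  congr 1
  apply Finset.sum_congr rfl
  intro i _
  rw [pow_succ]
  ring

lemma sum_split_firstT (s : ℕ → ℕ) (m : ℕ) :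
    ∑ i ∈ range (m + 1), s (i + 1) = s 1 + ∑ i ∈ range m, s (i + 2) := by
  rw [Finset.sum_range_succ' (fun i => s (i + 1)) m, add_comm]

include hb in
lemma sum_split_two (s : ℕ → ℕ) (m : ℕ) :
    ∑ i ∈ range (m + 2), s (i + 1) * b ^ i
      = s 1 + b * (s 2 + b * ∑ i ∈ range m, s (i + 3) * b ^ i) := by
  rw [show m + 2 = (m + 1) + 1 from rfl, sum_split_first hb s (m + 1)]
  congr 1
  rw [Finset.sum_range_succ' (fun i => s (i + 2) * b ^ i) m]
  simp only [pow_zero, mul_one, Nat.zero_add]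
  rw [add_comm, Finset.mul_sum]
  congr 1
  congr 1
  apply Finset.sum_congr rfl
  intro i _
  rw [show i + 1 + 2 = i + 3 from rfl, pow_succ]
  ring

lemma sum_split_twoT (s : ℕ → ℕ) (m : ℕ) :
    ∑ i ∈ range (m + 2), s (i + 1) = s 1 + (s 2 + ∑ i ∈ range m, s (i + 3)) := by
  rw [show m + 2 = (m + 1) + 1 from rfl, sum_split_firstT s (m + 1)]
  congr 1
  rw [Finset.sum_range_succ' (fun i => s (i + 2)) m, add_comm]

include hb hn in
lemma lemkey : ∀ M, 1 ≤ M → M ≤ (b - 1) * b ^ n + (b - 1) * b ^ (n - 1) →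
    ∀ a, ds b M + a * (b - 1) ≤ ds b (M - 1) + (b - 1) →
    ∃ t : ℕ → ℕ, Rb b n t ∧
      (∑ i ∈ range (n + 1), t (i + 1) * b ^ i) = M ∧
      (∑ i ∈ range (n + 1), t (i + 1)) = ds b M + a * (b - 1) ∧
      (1 ≤ a → ds b (M - 1) < ds b M + a * (b - 1) → t 1 = b) := by
  intro M
  induction M using Nat.strong_induction_on with
  | _ M ih =>
  intro hM1 hMmax a ha
  have e1 : (b - 1) * b ^ n = b * b ^ n - b ^ n := Nat.sub_one_mul _ _
  have e2 : (b - 1) * b ^ (n - 1) = b * b ^ (n - 1) - b ^ (n - 1) := Nat.sub_one_mul _ _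
  have e3 : b ^ n ≤ b * b ^ n := Nat.le_mul_of_pos_left _ (by omega)
  have e4 : b ^ (n - 1) ≤ b * b ^ (n - 1) := Nat.le_mul_of_pos_left _ (by omega)
  have e5 : b * b ^ (n - 1) = b ^ n := by
    rw [← pow_succ']
    congr 1
    omega
  have e6 : b * b ^ n = b ^ (n + 1) := by rw [pow_succ]; ring
  have e7 : 1 ≤ b ^ (n - 1) := Nat.one_le_pow _ _ (by omega)
  have hMlt : M < b ^ (n + 1) := by omega
  rcases Nat.eq_zero_or_pos a with ha0 | hapos
  · -- a = 0 : plain digits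
    subst ha0
    set t : ℕ → ℕ := fun j => if j = 0 then 0 else M / b ^ (j - 1) % b with htdef
    have hpt : ∀ i : ℕ, t (i + 1) = M / b ^ i % b := by
      intro i
      simp [htdef]
    have hsum : ∑ i ∈ range (n + 1), t (i + 1) * b ^ i = M := by
      simp only [hpt]
      exact digit_recon hb hMlt
    have hTeq : ∑ i ∈ range (n + 1), t (i + 1) = ds b M := by
      simp only [hpt]
      exact digit_ds hb hMlt
    refine ⟨t, ?_, hsum, by omega, by intro h; omega⟩
    refine Rb_of_sum hb hn ?_ ?_ ?_ hsum hMmax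
    · intro j
      rcases Nat.eq_zero_or_pos j with rfl | hj
      · simp [htdef]
      · simp only [htdef, if_neg (by omega : ¬ j = 0)]
        have := Nat.mod_lt (M / b ^ (j - 1)) (show 0 < b by omega)
        omega
    · intro j hj
      simp only [Finset.mem_Icc, not_and, not_le] at hj
      rcases Nat.eq_zero_or_pos j with rfl | hjp
      · simp [htdef]
      · simp only [htdef, if_neg (by omega : ¬ j = 0)]
        have hlt : M < b ^ (j - 1) :=
          lt_of_lt_of_le hMlt (Nat.pow_le_pow_right (by omega) (by omega))
        rw [Nat.div_eq_of_lt hlt]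
        simp
    · intro j hjb
      exfalso
      rcases Nat.eq_zero_or_pos j with rfl | hjp
      · simp [htdef] at hjb
        omega
      · simp only [htdef, if_neg (by omega : ¬ j = 0)] at hjb
        have := Nat.mod_lt (M / b ^ (j - 1)) (show 0 < b by omega)
        omega
  · -- a ≥ 1 : M divisible by b
    have hbdvd : b ∣ M := by
      by_contra hc
      have := ds_pred_of_not_dvd hb hM1 hc
      have h1 : b - 1 ≤ a * (b - 1) := Nat.le_mul_of_pos_left _ hapos
      omega
    obtain ⟨M', hMM'⟩ := hbdvd
    have hM'1 : 1 ≤ M' := by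
      rcases Nat.eq_zero_or_pos M' with rfl | h
      · omega
      · exact h
    have hM'M : M' < M := by
      have : 2 * M' ≤ b * M' := Nat.mul_le_mul_right _ (by omega)
      omega
    have hdsM : ds b M' = ds b M := by rw [hMM', ds_mul_b hb]
    have hdsM1 : ds b (M - 1) = (b - 1) + ds b (M' - 1) := by
      rw [hMM', ds_bmul_sub_one hb hM'1]
    have hM'max : M' ≤ (b - 1) * b ^ n + (b - 1) * b ^ (n - 1) := by omega
    have hM'lt : M' < b ^ n := by
      have h1 : b * M' < b * b ^ n := by omega
      exact Nat.lt_of_mul_lt_mul_left h1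
    by_cases hstrong : ds b M + a * (b - 1) ≤ ds b (M - 1)
    · -- strong case: recurse with same a, shift up
      have ha' : ds b M' + a * (b - 1) ≤ ds b (M' - 1) + (b - 1) := by omega
      obtain ⟨t', ht', hsum', hT', _⟩ := ih M' hM'M hM'1 hM'max a ha'
      have ht'top : t' (n + 1) = 0 := by
        have h1 : t' (n + 1) * b ^ n ≤ M' := by
          rw [← hsum']
          exact Finset.single_le_sum (f := fun i => t' (i + 1) * b ^ i)
            (fun i _ => Nat.zero_le _) (Finset.self_mem_range_succ n)
        rcases Nat.eq_zero_or_pos (t' (n + 1)) with h | h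
        · exact h
        · exfalso
          have : b ^ n ≤ t' (n + 1) * b ^ n := Nat.le_mul_of_pos_left _ h
          omega
      have hsum'n : ∑ i ∈ range n, t' (i + 1) * b ^ i = M' := by
        rw [Finset.sum_range_succ, ht'top] at hsum'
        simpa using hsum'
      have hT'n : ∑ i ∈ range n, t' (i + 1) = ds b M + a * (b - 1) := by
        rw [Finset.sum_range_succ, ht'top] at hT'
        simpa [hdsM] using hT'
      set t : ℕ → ℕ := fun j => if 2 ≤ j then t' (j - 1) else 0 with htdef
      have hpt1 : t 1 = 0 := by simp [htdef]
      have hptp : ∀ i : ℕ, t (i + 2) = t' (i + 1) := by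
        intro i
        simp only [htdef, if_pos (by omega : 2 ≤ i + 2)]
        congr 1
      have hsum2 : ∑ i ∈ range (n + 1), t (i + 1) * b ^ i = M := by
        rw [sum_split_first hb t n, hpt1]
        simp only [hptp]
        rw [hsum'n]
        omega
      have hT2 : ∑ i ∈ range (n + 1), t (i + 1) = ds b M + a * (b - 1) := by
        rw [sum_split_firstT t n, hpt1]
        simp only [hptp]
        rw [hT'n]
        omega
      refine ⟨t, ?_, hsum2, hT2, by intro _ h2; omega⟩
      refine Rb_of_sum hb hn ?_ ?_ ?_ hsum2 hMmax
      · intro j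
        by_cases hj : 2 ≤ j
        · simp only [htdef, if_pos hj]
          exact ht'.1 _
        · simp only [htdef, if_neg hj]
          omega
      · intro j hj
        simp only [Finset.mem_Icc, not_and, not_le] at hj
        by_cases hj2 : 2 ≤ j
        · simp only [htdef, if_pos hj2]
          by_cases hje : j = n + 2
          · rw [show j - 1 = n + 1 by omega]
            exact ht'top
          · exact ht'.2.1 (j - 1) (by simp only [Finset.mem_Icc]; omega)
        · simp only [htdef, if_neg hj2]
      · intro j hjb i hij
        by_cases hj2 : 2 ≤ j
        · simp only [htdef, if_pos hj2] at hjb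
          have hz := ht'.2.2.2.1 (j - 1) hjb
          by_cases hi2 : 2 ≤ i
          · simp only [htdef, if_pos hi2]
            exact hz (i - 1) (by omega)
          · simp only [htdef, if_neg hi2]
        · simp only [htdef, if_neg hj2] at hjb
          omega
    · -- else case: recurse with a-1, apply the move
      push_neg at hstrong
      have haexp : a * (b - 1) = (a - 1) * (b - 1) + (b - 1) := by
        calc a * (b - 1) = ((a - 1) + 1) * (b - 1) := by rw [show a - 1 + 1 = a by omega]
          _ = (a - 1) * (b - 1) + (b - 1) := by ring
      have ha'' : ds b M' + (a - 1) * (b - 1) ≤ ds b (M' - 1) + (b - 1) := by omega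
      obtain ⟨t'', ht'', hsum'', hT'', hstr''⟩ := ih M' hM'M hM'1 hM'max (a - 1) ha''
      have ht''top : t'' (n + 1) = 0 := by
        have h1 : t'' (n + 1) * b ^ n ≤ M' := by
          rw [← hsum'']
          exact Finset.single_le_sum (f := fun i => t'' (i + 1) * b ^ i)
            (fun i _ => Nat.zero_le _) (Finset.self_mem_range_succ n)
        rcases Nat.eq_zero_or_pos (t'' (n + 1)) with h | h
        · exact h
        · exfalso
          have : b ^ n ≤ t'' (n + 1) * b ^ n := Nat.le_mul_of_pos_left _ h
          omega
      -- t'' 1 ≥ 1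
      have ht''1 : 1 ≤ t'' 1 := by
        rcases Nat.lt_or_ge a 2 with ha2 | ha2
        · -- a = 1 : via non-divisibility of M'
          have ha1 : a = 1 := by omega
          have hnd : ¬ b ∣ M' := by
            rintro ⟨M'', hM''⟩
            have hM''1 : 1 ≤ M'' := by
              rcases Nat.eq_zero_or_pos M'' with rfl | h
              · omega
              · exact h
            have d1 : ds b M'' = ds b M' := by rw [hM'', ds_mul_b hb]
            have d2 : ds b (M' - 1) = (b - 1) + ds b (M'' - 1) := by
              rw [hM'', ds_bmul_sub_one hb hM''1]
            have d3 : ds b M'' ≤ ds b (M'' - 1) + 1 := ds_pred_lb hb hM''1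
            subst ha1
            simp only [Nat.one_mul] at hstrong
            omega
          -- M' ≡ t'' 1 [mod b]
          have hdecomp : M' = t'' 1 + b * ∑ i ∈ range n, t'' (i + 2) * b ^ i := by
            rw [← hsum'', sum_split_first hb t'' n]
          rcases Nat.eq_zero_or_pos (t'' 1) with h0 | h
          · exfalso
            apply hnd
            rw [hdecomp, h0]
            exact ⟨∑ i ∈ range n, t'' (i + 2) * b ^ i, by ring⟩
          · exact h
        · -- a ≥ 2 : strengthened IH gives t'' 1 = b
          have := hstr'' (by omega) (by omega)
          omega
      have hKfull : ∑ i ∈ range n, t'' (i + 2) * b ^ i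
          = ∑ i ∈ range (n - 1), t'' (i + 2) * b ^ i := by
        conv_lhs => rw [show n = (n - 1) + 1 by omega, Finset.sum_range_succ]
        rw [show n - 1 + 2 = n + 1 by omega, ht''top]
        simp
      have hdecomp : M' = t'' 1 + b * ∑ i ∈ range (n - 1), t'' (i + 2) * b ^ i := by
        rw [← hsum'', sum_split_first hb t'' n, hKfull]
      have hTdecomp : ds b M + (a - 1) * (b - 1)
          = t'' 1 + ∑ i ∈ range (n - 1), t'' (i + 2) := by
        rw [← hdsM, ← hT'', sum_split_firstT t'' n]
        congr 1
        conv_lhs => rw [show n = (n - 1) + 1 by omega, Finset.sum_range_succ]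
        rw [show n - 1 + 2 = n + 1 by omega, ht''top]
        simp
      set t : ℕ → ℕ := fun j =>
        if j = 0 then 0 else if j = 1 then b else if j = 2 then t'' 1 - 1 else t'' (j - 1)
        with htdef
      have hpt1 : t 1 = b := by simp [htdef]
      have hpt2 : t 2 = t'' 1 - 1 := by simp [htdef]
      have hptp : ∀ j, 3 ≤ j → t j = t'' (j - 1) := by
        intro j hj
        simp only [htdef, if_neg (by omega : ¬ j = 0), if_neg (by omega : ¬ j = 1),
          if_neg (by omega : ¬ j = 2)]
      have hptp' : ∀ i : ℕ, t (i + 3) = t'' (i + 2) := by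
        intro i
        rw [hptp (i + 3) (by omega)]
        congr 1
      have hsum2 : ∑ i ∈ range (n + 1), t (i + 1) * b ^ i = M := by
        conv_lhs => rw [show n + 1 = (n - 1) + 2 by omega]
        rw [sum_split_two hb t (n - 1), hpt1, hpt2]
        simp only [hptp']
        set K := ∑ i ∈ range (n - 1), t'' (i + 2) * b ^ i
        have hx1 : b * ((t'' 1 - 1) + b * K) = b * (t'' 1 - 1) + b * (b * K) := by ring
        have hx2 : b * (t'' 1 - 1) = b * t'' 1 - b := by rw [Nat.mul_sub, Nat.mul_one]
        have hx3 : b ≤ b * t'' 1 := Nat.le_mul_of_pos_right _ ht''1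
        have hx4 : M = b * t'' 1 + b * (b * K) := by
          rw [hMM', hdecomp]
          ring
        omega
      have hT2 : ∑ i ∈ range (n + 1), t (i + 1) = ds b M + a * (b - 1) := by
        conv_lhs => rw [show n + 1 = (n - 1) + 2 by omega]
        rw [sum_split_twoT t (n - 1), hpt1, hpt2]
        simp only [hptp']
        omega
      refine ⟨t, ?_, hsum2, hT2, fun _ _ => hpt1⟩
      refine Rb_of_sum hb hn ?_ ?_ ?_ hsum2 hMmax
      · intro j
        rcases Nat.eq_zero_or_pos j with rfl | hj0
        · simp [htdef]
        by_cases hj1 : j = 1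
        · subst hj1; rw [hpt1]
        by_cases hj2 : j = 2
        · subst hj2
          rw [hpt2]
          have := ht''.1 1
          omega
        · rw [hptp j (by omega)]
          exact ht''.1 _
      · intro j hj
        simp only [Finset.mem_Icc, not_and, not_le] at hj
        rcases Nat.eq_zero_or_pos j with rfl | hj0
        · simp [htdef]
        have hj3 : n + 2 ≤ j := by omega
        rw [hptp j (by omega)]
        by_cases hje : j = n + 2
        · rw [show j - 1 = n + 1 by omega]
          exact ht''top
        · exact ht''.2.1 (j - 1) (by simp only [Finset.mem_Icc]; omega)
      · intro j hjb i hij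
        rcases Nat.eq_zero_or_pos j with rfl | hj0
        · simp only [htdef, if_pos rfl] at hjb
          omega
        by_cases hj1 : j = 1
        · subst hj1
          interval_cases i
          simp [htdef]
        by_cases hj2 : j = 2
        · exfalso
          subst hj2
          rw [hpt2] at hjb
          have := ht''.1 1
          omega
        · exfalso
          rw [hptp j (by omega)] at hjb
          have hz := ht''.2.2.2.1 (j - 1) hjb 1 (by omega)
          omega

end construct

section final
variable {b n : ℕ} (hb : 2 ≤ b) (hn : 1 ≤ n)

include hb hn in
lemma surj (u : ℕ) (hu : u ≤ (b + 1) * b ^ n - 2) :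
    ∃ t : ℕ → ℕ, Rb b n t ∧ ∃ m : ℕ,
      (∑ j ∈ Finset.Icc 1 (n + 1), t j * ((b + 1) * b ^ (n + j) - 1))
        = ((b + 1) * b ^ n - 1) * m + (b - 1) * u := by
  rcases Nat.eq_zero_or_pos u with rfl | hupos
  · refine ⟨fun _ => 0, ?_, 0, by simp⟩
    exact ⟨fun j => Nat.zero_le _, fun j _ => rfl, Nat.zero_le _, fun j h i _ => rfl,
      fun _ => Nat.zero_le _, fun _ _ i _ _ => rfl⟩
  · -- minimal M with (b-1)*u ≤ b*M - ds b M
    have hex : ∃ M, (b - 1) * u ≤ b * M - ds b M := by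
      refine ⟨u, ?_⟩
      have h1 : ds b u ≤ u := ds_le hb u
      have h2 : (b - 1) * u = b * u - u := Nat.sub_one_mul _ _
      have h3 : u ≤ b * u := Nat.le_mul_of_pos_left _ (by omega)
      omega
    set M := Nat.find hex with hMdef
    have hfind : (b - 1) * u ≤ b * M - ds b M := Nat.find_spec hex
    have hM1 : 1 ≤ M := by
      rcases Nat.eq_zero_or_pos M with h0 | h
      · exfalso
        rw [h0] at hfind
        simp [ds_zero] at hfind
        have : 1 ≤ (b - 1) * u := Nat.mul_pos (by omega) hupos
        omega
      · exact h
    have hMmax : M ≤ (b - 1) * b ^ n + (b - 1) * b ^ (n - 1) := by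
      apply Nat.find_min'
      -- ds of Mx is 2*(b-1)
      have hMx : (b - 1) * b ^ n + (b - 1) * b ^ (n - 1)
          = b ^ (n - 1) * ((b - 1) + b * (b - 1)) := by
        have h1 : b ^ n = b ^ (n - 1) * b := by
          rw [← pow_succ]
          congr 1
          omega
        rw [h1]
        ring
      have hds : ds b ((b - 1) * b ^ n + (b - 1) * b ^ (n - 1)) = 2 * (b - 1) := by
        rw [hMx, ds_pow_mul hb, ds_add_mul hb (by omega), ds_lt_b hb (by omega)]
        omega
      rw [hds]
      -- b * Mx - 2*(b-1) ≥ (b-1) * u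
      have h1 : (b - 1) * u ≤ (b - 1) * ((b + 1) * b ^ n - 2) := Nat.mul_le_mul_left _ hu
      have h2 : (b - 1) * ((b + 1) * b ^ n - 2)
          ≤ b * ((b - 1) * b ^ n + (b - 1) * b ^ (n - 1)) - 2 * (b - 1) := by
        have e5 : b * b ^ (n - 1) = b ^ n := by
          rw [← pow_succ']
          congr 1
          omega
        have e6 : b * b ^ n = b ^ (n + 1) := by rw [pow_succ]; ring
        have e7 : 1 ≤ b ^ (n - 1) := Nat.one_le_pow _ _ (by omega)
        have e8 : b * ((b - 1) * b ^ n + (b - 1) * b ^ (n - 1))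
            = (b - 1) * (b * b ^ n) + (b - 1) * (b * b ^ (n - 1)) := by ring
        have e9 : (b - 1) * ((b + 1) * b ^ n - 2)
            = (b - 1) * ((b + 1) * b ^ n) - (b - 1) * 2 := by
          rw [← Nat.mul_sub]
        have e10 : (b - 1) * ((b + 1) * b ^ n) = (b - 1) * (b ^ (n + 1) + b ^ n) := by
          have : (b + 1) * b ^ n = b * b ^ n + b ^ n := by ring
          rw [this, e6]
        have e11 : (b - 1) * (b ^ (n + 1) + b ^ n)
            = (b - 1) * b ^ (n + 1) + (b - 1) * b ^ n := by ring
        have e12 : (b - 1) * b ^ (n + 1) = b * b ^ (n + 1) - b ^ (n + 1) := Nat.sub_one_mul _ _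
        have e13 : (b - 1) * b ^ n = b * b ^ n - b ^ n := Nat.sub_one_mul _ _
        have e12' : (b - 1) * (b * b ^ n) = b * b ^ (n + 1) - b ^ (n + 1) := by
          rw [e6]
          exact Nat.sub_one_mul _ _
        have e13' : (b - 1) * (b * b ^ (n - 1)) = b * b ^ n - b ^ n := by
          rw [e5]
          exact Nat.sub_one_mul _ _
        have e14 : b ^ (n + 1) ≤ b * b ^ (n + 1) := Nat.le_mul_of_pos_left _ (by omega)
        have e15 : b ^ n ≤ b * b ^ n := Nat.le_mul_of_pos_left _ (by omega)
        have e16 : 2 ≤ b ^ n := by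
          calc 2 ≤ b := by omega
            _ = b ^ 1 := (pow_one b).symm
            _ ≤ b ^ n := Nat.pow_le_pow_right (by omega) hn
        omega
      omega
    -- decompose g M
    set D := ds b M with hDdef
    obtain ⟨e, he⟩ := ds_modeq hb M
    rw [← hDdef] at he
    have hDle : D ≤ M := ds_le hb M
    have hgM : b * M = D + (b - 1) * (D + b * e) := by
      have hA : b * M = b * D + b * ((b - 1) * e) := by
        conv_lhs => rw [he]
        ring
      have hB : b * D = D + (b - 1) * D := by
        have := Nat.sub_one_mul b D
        have : (b - 1) * D = b * D - D := Nat.sub_one_mul _ _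
        have hDb : D ≤ b * D := Nat.le_mul_of_pos_left _ (by omega)
        omega
      have hC : b * ((b - 1) * e) = (b - 1) * (b * e) := by ring
      have hD2 : (b - 1) * (D + b * e) = (b - 1) * D + (b - 1) * (b * e) := by ring
      omega
    have hSu : u ≤ D + b * e := by
      by_contra hc
      push_neg at hc
      have h1 : (b - 1) * (D + b * e) + (b - 1) ≤ (b - 1) * u := by
        have h2 := Nat.mul_le_mul_left (b - 1) (show D + b * e + 1 ≤ u by omega)
        have h3 : (b - 1) * (D + b * e + 1) = (b - 1) * (D + b * e) + (b - 1) := by ring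
        omega
      omega
    set a := D + b * e - u with hadef
    have ha_eq : a * (b - 1) = (b * M - D) - (b - 1) * u := by
      have h1 : (b - 1) * a + (b - 1) * u = (b - 1) * (D + b * e) := by
        rw [← Nat.mul_add]
        congr 1
        omega
      have h2 : a * (b - 1) = (b - 1) * a := Nat.mul_comm _ _
      omega
    -- lemkey hypothesis, from minimality at M - 1
    have hmin : ¬ ((b - 1) * u ≤ b * (M - 1) - ds b (M - 1)) := Nat.find_min hex (by omega)
    push_neg at hmin
    have hds1 : ds b (M - 1) ≤ b * (M - 1) := le_trans (ds_le hb _) (Nat.le_mul_of_pos_left _ (by omega))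
    have hkey : ds b M + a * (b - 1) ≤ ds b (M - 1) + (b - 1) := by
      have h1 : b * (M - 1) = b * M - b := by
        rw [Nat.mul_sub, Nat.mul_one]
      omega
    obtain ⟨t, ht, hsumM, hsumT, _⟩ := lemkey hb hn M hM1 hMmax a hkey
    refine ⟨t, ht, b * M, ?_⟩
    have hw := w_id hb (n := n) t
    rw [icc_to_range]
    rw [hsumM, hsumT] at hw
    -- w + (D + a*(b-1)) = N * (b*M), and D + a*(b-1) = b*M - (b-1)*u
    have hT : D + a * (b - 1) = b * M - (b - 1) * u := by omega
    have hN2 : 2 ≤ (b + 1) * b ^ n := by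
      have : 1 ≤ b ^ n := Nat.one_le_pow _ _ (by omega)
      calc 2 ≤ (b + 1) * 1 := by omega
        _ ≤ (b + 1) * b ^ n := Nat.mul_le_mul_left _ this
    have hsub : ((b + 1) * b ^ n - 1) * (b * M) = (b + 1) * b ^ n * (b * M) - b * M :=
      Nat.sub_one_mul _ _
    have hble : b * M ≤ (b + 1) * b ^ n * (b * M) := Nat.le_mul_of_pos_left _ (by omega)
    omega

include hb hn in
lemma apery_unique {x y : ℕ} (hx : x ∈ thabitSemigroup b n) (hy : y ∈ thabitSemigroup b n)
    (hxA : ¬ ∃ v ∈ thabitSemigroup b n, v + ((b + 1) * b ^ n - 1) = x)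
    (hyA : ¬ ∃ v ∈ thabitSemigroup b n, v + ((b + 1) * b ^ n - 1) = y)
    (hxy : x ≡ y [MOD (b + 1) * b ^ n - 1]) : x = y := by
  have hs0 : (b + 1) * b ^ n - 1 ∈ thabitSemigroup b n := by
    have := gen_mem (b := b) (n := n) 0
    simpa using this
  have hs0pos : 1 ≤ (b + 1) * b ^ n - 1 := by
    have : 1 ≤ b ^ n := Nat.one_le_pow _ _ (by omega)
    have : (b + 1) * 1 ≤ (b + 1) * b ^ n := Nat.mul_le_mul_left _ this
    omega
  set s0 := (b + 1) * b ^ n - 1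
  -- wlog x ≤ y
  rcases le_total x y with hle | hle
  · obtain ⟨k, hk⟩ : s0 ∣ y - x := (Nat.modEq_iff_dvd' hle).mp hxy
    rcases Nat.eq_zero_or_pos k with rfl | hk1
    · omega
    · exfalso
      apply hyA
      refine ⟨x + (k - 1) * s0, ?_, by
        have h1 : (k - 1) * s0 + s0 = k * s0 := by
          calc (k - 1) * s0 + s0 = ((k - 1) + 1) * s0 := by ring
            _ = k * s0 := by rw [show k - 1 + 1 = k by omega]
        have h2 : s0 * k = k * s0 := Nat.mul_comm _ _
        omega⟩
      exact AddSubmonoid.add_mem _ hx (by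
        simpa [smul_eq_mul] using AddSubmonoid.nsmul_mem _ hs0 (k - 1))
  · obtain ⟨k, hk⟩ : s0 ∣ x - y := (Nat.modEq_iff_dvd' hle).mp hxy.symm
    rcases Nat.eq_zero_or_pos k with rfl | hk1
    · omega
    · exfalso
      apply hxA
      refine ⟨y + (k - 1) * s0, ?_, by
        have h1 : (k - 1) * s0 + s0 = k * s0 := by
          calc (k - 1) * s0 + s0 = ((k - 1) + 1) * s0 := by ring
            _ = k * s0 := by rw [show k - 1 + 1 = k by omega]
        have h2 : s0 * k = k * s0 := Nat.mul_comm _ _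
        omega⟩
      exact AddSubmonoid.add_mem _ hy (by
        simpa [smul_eq_mul] using AddSubmonoid.nsmul_mem _ hs0 (k - 1))

end final

theorem thabit_apery_set' (n b : ℕ) (hn : 1 ≤ n) (hb : 2 ≤ b) :
    {s : ℕ | s ∈ thabitSemigroup b n ∧
        ¬ ∃ t ∈ thabitSemigroup b n, t + ((b + 1) * b ^ n - 1) = s}
      = {x : ℕ | ∃ t : ℕ → ℕ, Rb b n t ∧
          x = ∑ j ∈ Finset.Icc 1 (n + 1), t j * ((b + 1) * b ^ (n + j) - 1)} := by
  have hN2 : 2 ≤ (b + 1) * b ^ n := by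
    have h : 1 ≤ b ^ n := Nat.one_le_pow _ _ (by omega)
    calc 2 ≤ (b + 1) * 1 := by omega
      _ ≤ (b + 1) * b ^ n := Nat.mul_le_mul_left _ h
  have hs0pos : 1 ≤ (b + 1) * b ^ n - 1 := by omega
  set s0 : ℕ := (b + 1) * b ^ n - 1 with hs0def
  haveI : NeZero s0 := ⟨by omega⟩
  have hcop : Nat.Coprime (b - 1) s0 := by
    have hdc : (b - 1) ∣ ((b + 1) * b ^ n - 2) := by
      have h2 : (b + 1) * (b ^ n - 1) = (b + 1) * b ^ n - (b + 1) := by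
        rw [Nat.mul_sub, Nat.mul_one]
      have h3 : b + 1 ≤ (b + 1) * b ^ n :=
        Nat.le_mul_of_pos_right _ (Nat.pow_pos (by omega))
      have h1 : (b + 1) * b ^ n - 2 = (b + 1) * (b ^ n - 1) + (b - 1) := by omega
      rw [h1]
      exact Nat.dvd_add (Dvd.dvd.mul_left (by simpa using Nat.sub_dvd_pow_sub_pow b 1 n) _)
        dvd_rfl
    have hd1 : Nat.gcd (b - 1) s0 ∣ 1 := by
      have g1 : Nat.gcd (b - 1) s0 ∣ (b + 1) * b ^ n - 2 :=
        dvd_trans (Nat.gcd_dvd_left _ _) hdc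
      have g2 : Nat.gcd (b - 1) s0 ∣ s0 := Nat.gcd_dvd_right _ _
      have := Nat.dvd_sub g2 g1
      rwa [show s0 - ((b + 1) * b ^ n - 2) = 1 by omega] at this
    exact Nat.eq_one_of_dvd_one hd1
  ext s
  simp only [Set.mem_setOf_eq]
  constructor
  · rintro ⟨hsS, hsAp⟩
    -- choose u with (b-1)*u ≡ s [MOD s0]
    set z : ZMod s0 := (s : ZMod s0) * (((b - 1 : ℕ) : ZMod s0))⁻¹ with hzdef
    set u : ℕ := z.val with hudef
    have hulub : u < s0 := ZMod.val_lt z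
    have hcongr : (b - 1) * u ≡ s [MOD s0] := by
      rw [← ZMod.natCast_eq_natCast_iff]
      push_cast
      rw [hudef, ZMod.natCast_val, ZMod.cast_id, hzdef]
      calc ((b - 1 : ℕ) : ZMod s0) * ((s : ZMod s0) * (((b - 1 : ℕ) : ZMod s0))⁻¹)
          = (s : ZMod s0) * (((b - 1 : ℕ) : ZMod s0) * (((b - 1 : ℕ) : ZMod s0))⁻¹) := by
            ring
        _ = s := by rw [ZMod.coe_mul_inv_eq_one _ hcop, mul_one]
    obtain ⟨t, ht, m, hm⟩ := surj hb hn u (by omega)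
    have hw := Rb_apery hb hn ht
    have hweq : s = ∑ j ∈ Finset.Icc 1 (n + 1), t j * ((b + 1) * b ^ (n + j) - 1) := by
      apply apery_unique hb hn hsS hw.1 hsAp hw.2
      calc s ≡ (b - 1) * u [MOD s0] := hcongr.symm
        _ ≡ s0 * m + (b - 1) * u [MOD s0] := by
            exact (Nat.modEq_iff_dvd' (by omega)).mpr ⟨m, by omega⟩
        _ = ∑ j ∈ Finset.Icc 1 (n + 1), t j * ((b + 1) * b ^ (n + j) - 1) := by
            rw [hm]
    exact ⟨t, ht, hweq⟩
  · rintro ⟨t, ht, rfl⟩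
    exact Rb_apery hb hn ht

theorem thabit_apery_set (n b : ℕ) (hn : 1 ≤ n) (hb : 2 ≤ b) :
    {s : ℕ | s ∈ thabitSemigroup b n ∧
        ¬ ∃ t ∈ thabitSemigroup b n, t + ((b + 1) * b ^ n - 1) = s}
      = {x : ℕ | ∃ t : ℕ → ℕ, Rb b n t ∧
          x = ∑ j ∈ Finset.Icc 1 (n + 1), t j * ((b + 1) * b ^ (n + j) - 1)} := by
  exact thabit_apery_set' n b hn hb
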